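/- For all positive integers i, j, k with i < j < k and i + j ≠ k, one has h_{i,j,k} = 2·h_{i+j+k} + h_i·h_j·h_k − h_{i+j}·h_k − h_{i+k}·h_j − h_{j+k}·h_i. -/

import Mathlib

open MvPolynomial

noncomputable section

/-- The total Pontryagin-class variable of the first factor: `p'_k`,
with `p'_0 = 1`.  Variables are indexed by positive integers `k`. -/
def pFst (k : ℕ) : MvPolynomial (ℕ ⊕ ℕ) ℚ := if k = 0 then 1 else X (Sum.inl k)

/-- `p''_k` for the second factor, with `p''_0 = 1`. -/
def pSnd (k : ℕ) : MvPolynomial (ℕ ⊕ ℕ) ℚ := if k = 0 then 1 else X (Sum.inr k)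

/-- The `k`-th Pontryagin class of a product, via the Whitney formula:
`p_k = ∑_{a+b=k} p'_a p''_b`. -/
def pProd (k : ℕ) : MvPolynomial (ℕ ⊕ ℕ) ℚ :=
  ∑ a ∈ Finset.range (k + 1), pFst a * pSnd (k - a)

/-- A multiplicative sequence of polynomials `L_n` in the variables
`p_1, p_2, …` (variable `k ≥ 1` of `MvPolynomial ℕ ℚ` stands for `p_k`;
variable `0` is unused): `L_0 = 1`, each `L_n` is homogeneous of weighted
degree `n` (where `p_k` has weight `k`), and the sequence satisfies
`L_n(p(ξ×η)) = ∑_{i+j=n} L_i(p(ξ)) L_j(p(η))`.  The Hirzebruch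
`L`-polynomials (associated to `√t/tanh √t`) form such a sequence. -/
def IsMultiplicativeSeq (L : ℕ → MvPolynomial ℕ ℚ) : Prop :=
  L 0 = 1 ∧
  (∀ n d, coeff d (L n) ≠ 0 → d 0 = 0) ∧
  (∀ n d, coeff d (L n) ≠ 0 → (d.sum fun k e => k * e) = n) ∧
  (∀ n, aeval pProd (L n) =
    ∑ i ∈ Finset.range (n + 1), aeval pFst (L i) * aeval pSnd (L (n - i)))

/-- `h_i`: the coefficient of `p_i` in `L_i`. -/
def h1 (L : ℕ → MvPolynomial ℕ ℚ) (i : ℕ) : ℚ :=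
  coeff (Finsupp.single i 1) (L i)

/-- `h_{i,j}`: the coefficient of `p_i p_j` in `L_{i+j}` (of `p_i²` in `L_{2i}` if `i = j`). -/
def h2 (L : ℕ → MvPolynomial ℕ ℚ) (i j : ℕ) : ℚ :=
  coeff (Finsupp.single i 1 + Finsupp.single j 1) (L (i + j))

/-- `h_{i,j,k}`: the coefficient of `p_i p_j p_k` in `L_{i+j+k}`. -/
def h3 (L : ℕ → MvPolynomial ℕ ℚ) (i j k : ℕ) : ℚ :=
  coeff (Finsupp.single i 1 + Finsupp.single j 1 + Finsupp.single k 1) (L (i + j + k))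

end

private lemma Xmono (s : Fin 3) :
    (X s : MvPolynomial (Fin 3) ℚ) = monomial (Finsupp.single s 1) 1 := rfl

private lemma prod_pow_monomial (E : ℕ → Fin 3 →₀ ℕ) (c : ℕ → ℚ) (d : ℕ →₀ ℕ) :
    (d.prod fun m e => (monomial (E m) (c m) : MvPolynomial (Fin 3) ℚ) ^ e)
      = monomial (d.sum fun m e => e • E m) (d.prod fun m e => c m ^ e) := by
  classical
  rw [Finsupp.prod, Finsupp.sum, Finsupp.prod]
  generalize d.support = s
  induction s using Finset.induction_on with
  | empty => simp
  | insert _ _ hx ih =>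
      rw [Finset.prod_insert hx, Finset.sum_insert hx, Finset.prod_insert hx, ih,
        monomial_pow, monomial_mul]

private lemma coeff_aeval_monomials (E : ℕ → Fin 3 →₀ ℕ) (c : ℕ → ℚ)
    (P : MvPolynomial ℕ ℚ) (u : Fin 3 →₀ ℕ) :
    coeff u (aeval (fun m => (monomial (E m) (c m) : MvPolynomial (Fin 3) ℚ)) P)
      = ∑ d ∈ P.support, coeff d P *
          (if (d.sum fun m e => e • E m) = u then d.prod fun m e => c m ^ e else 0) := by
  conv_lhs => rw [P.as_sum, map_sum]
  rw [coeff_sum]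
  refine Finset.sum_congr rfl fun d _ => ?_
  rw [aeval_monomial, algebraMap_eq, coeff_C_mul, prod_pow_monomial, coeff_monomial]

private lemma repr5 {p₁ p₂ p₃ p₄ p₅ : ℕ} (h12 : p₁ ≠ p₂) (h13 : p₁ ≠ p₃) (h14 : p₁ ≠ p₄)
    (h15 : p₁ ≠ p₅) (h23 : p₂ ≠ p₃) (h24 : p₂ ≠ p₄) (h25 : p₂ ≠ p₅) (h34 : p₃ ≠ p₄)
    (h35 : p₃ ≠ p₅) (h45 : p₄ ≠ p₅) (d : ℕ →₀ ℕ)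
    (hd : ∀ m, d m ≠ 0 → m = p₁ ∨ m = p₂ ∨ m = p₃ ∨ m = p₄ ∨ m = p₅) :
    d = Finsupp.single p₁ (d p₁) + Finsupp.single p₂ (d p₂) + Finsupp.single p₃ (d p₃)
        + Finsupp.single p₄ (d p₄) + Finsupp.single p₅ (d p₅) := by
  ext m
  simp only [Finsupp.add_apply, Finsupp.single_apply]
  rcases eq_or_ne m p₁ with h | h1
  · subst h; split_ifs <;> omega
  rcases eq_or_ne m p₂ with h | h2
  · subst h; split_ifs <;> omega
  rcases eq_or_ne m p₃ with h | h3
  · subst h; split_ifs <;> omega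
  rcases eq_or_ne m p₄ with h | h4
  · subst h; split_ifs <;> omega
  rcases eq_or_ne m p₅ with h | h5
  · subst h; split_ifs <;> omega
  have hm : d m = 0 := by
    by_contra hc
    rcases hd m hc with h | h | h | h | h <;> simp_all
  split_ifs <;> omega

private lemma sum5 (p₁ p₂ p₃ p₄ p₅ a₁ a₂ a₃ a₄ a₅ : ℕ) (E : ℕ → Fin 3 →₀ ℕ) :
    ((Finsupp.single p₁ a₁ + Finsupp.single p₂ a₂ + Finsupp.single p₃ a₃
        + Finsupp.single p₄ a₄ + Finsupp.single p₅ a₅).sum fun m e => e • E m)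
      = a₁ • E p₁ + a₂ • E p₂ + a₃ • E p₃ + a₄ • E p₄ + a₅ • E p₅ := by
  have hz : ∀ m : ℕ, (0 : ℕ) • E m = 0 := fun m => zero_smul _ _
  have hadd : ∀ (m : ℕ) (e₁ e₂ : ℕ), (e₁ + e₂) • E m = e₁ • E m + e₂ • E m :=
    fun m e₁ e₂ => add_smul _ _ _
  rw [Finsupp.sum_add_index' hz hadd, Finsupp.sum_add_index' hz hadd,
    Finsupp.sum_add_index' hz hadd, Finsupp.sum_add_index' hz hadd,
    Finsupp.sum_single_index (hz _), Finsupp.sum_single_index (hz _),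
    Finsupp.sum_single_index (hz _), Finsupp.sum_single_index (hz _),
    Finsupp.sum_single_index (hz _)]

private lemma pair_single_eq {s t : Fin 3} (hst : s ≠ t) {a b a' b' : ℕ} :
    Finsupp.single s a + Finsupp.single t b = Finsupp.single s a' + Finsupp.single t b'
      ↔ a = a' ∧ b = b' := by
  constructor
  · intro h
    have h1 := DFunLike.congr_fun h s
    have h2 := DFunLike.congr_fun h t
    simp [Finsupp.single_apply, hst, hst.symm] at h1 h2
    exact ⟨h1, h2⟩
  · rintro ⟨rfl, rfl⟩; rfl

private lemma triple_single_eq {a b c a' b' c' : ℕ} :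
    (Finsupp.single (0 : Fin 3) a + Finsupp.single 1 b + Finsupp.single 2 c
      = Finsupp.single 0 a' + Finsupp.single 1 b' + Finsupp.single 2 c')
      ↔ (a = a' ∧ b = b' ∧ c = c') := by
  constructor
  · intro h
    have h0 := DFunLike.congr_fun h 0
    have h1 := DFunLike.congr_fun h 1
    have h2 := DFunLike.congr_fun h 2
    simp [Finsupp.single_apply] at h0 h1 h2
    exact ⟨h0, h1, h2⟩
  · rintro ⟨rfl, rfl, rfl⟩; rfl

private lemma coeff_mul_split (P Q : MvPolynomial (Fin 3) ℚ) (a b c : ℕ)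
    (hP : ∀ v : Fin 3 →₀ ℕ, v 2 ≠ 0 → coeff v P = 0)
    (hQ : ∀ w : Fin 3 →₀ ℕ, w 0 ≠ 0 ∨ w 1 ≠ 0 → coeff w Q = 0) :
    coeff (Finsupp.single 0 a + Finsupp.single 1 b + Finsupp.single 2 c) (P * Q)
      = coeff (Finsupp.single 0 a + Finsupp.single 1 b) P * coeff (Finsupp.single 2 c) Q := by
  rw [coeff_mul]
  apply Finset.sum_eq_single_of_mem
    (Finsupp.single 0 a + Finsupp.single 1 b, Finsupp.single 2 c)
  · rw [Finset.HasAntidiagonal.mem_antidiagonal]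
  · rintro ⟨v, w⟩ hmem hne
    rw [Finset.HasAntidiagonal.mem_antidiagonal] at hmem
    have h0 := DFunLike.congr_fun hmem 0
    have h1 := DFunLike.congr_fun hmem 1
    have h2 := DFunLike.congr_fun hmem 2
    simp [Finsupp.single_apply] at h0 h1 h2
    by_cases hv2 : v 2 = 0
    · by_cases hw : w 0 = 0 ∧ w 1 = 0
      · exfalso
        apply hne
        have hv : v = Finsupp.single 0 a + Finsupp.single 1 b := by
          ext x; fin_cases x <;> simp [Finsupp.single_apply] <;> omega
        have hwq : w = Finsupp.single 2 c := by
          ext x; fin_cases x <;> simp [Finsupp.single_apply] <;> omega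
        rw [hv, hwq]
      · rw [hQ w (by tauto), mul_zero]
    · rw [hP v hv2, zero_mul]

private lemma sum_indicator_collapse (P : MvPolynomial ℕ ℚ) (D : ℕ →₀ ℕ) :
    (∑ d ∈ P.support, if d = D then coeff d P else 0) = coeff D P := by
  rw [Finset.sum_ite_eq' P.support D (fun d => coeff d P)]
  split_ifs with h
  · rfl
  · exact (MvPolynomial.notMem_support_iff.mp h).symm

private lemma vanish_at (E : ℕ → Fin 3 →₀ ℕ) (c : ℕ → ℚ) (x : Fin 3)
    (hE : ∀ m, E m x = 0) (P : MvPolynomial ℕ ℚ) (v : Fin 3 →₀ ℕ) (hv : v x ≠ 0) :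
    coeff v (aeval (fun m => (monomial (E m) (c m) : MvPolynomial (Fin 3) ℚ)) P) = 0 := by
  rw [coeff_aeval_monomials]
  apply Finset.sum_eq_zero
  intro d _
  rw [if_neg, mul_zero]
  intro h
  apply hv
  rw [← h, Finsupp.sum_apply]
  simp [hE]

private lemma weight_single (p : ℕ) :
    ((Finsupp.single p 1 : ℕ →₀ ℕ).sum fun m e => m * e) = p := by
  rw [Finsupp.sum_single_index (mul_zero p), mul_one]

private lemma weight_pair (p q : ℕ) :
    ((Finsupp.single p 1 + Finsupp.single q 1 : ℕ →₀ ℕ).sum fun m e => m * e) = p + q := by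
  rw [Finsupp.sum_add_index' (fun m => mul_zero m) (fun m e₁ e₂ => mul_add m e₁ e₂),
    Finsupp.sum_single_index (mul_zero p), Finsupp.sum_single_index (mul_zero q), mul_one, mul_one]
private noncomputable def E1 (p : ℕ) (x : Fin 3) : ℕ → Fin 3 →₀ ℕ := fun m =>
  if m = p then Finsupp.single x 1 else 0

private def c1 (p : ℕ) : ℕ → ℚ := fun m => if m = 0 ∨ m = p then 1 else 0

private noncomputable def E2 (p q : ℕ) (x y : Fin 3) : ℕ → Fin 3 →₀ ℕ := fun m =>
  if m = p then Finsupp.single x 1 else if m = q then Finsupp.single y 1 else 0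

private def c2' (p q : ℕ) : ℕ → ℚ := fun m => if m = 0 ∨ m = p ∨ m = q then 1 else 0

private lemma coeff_single_pt (p : ℕ) (x : Fin 3) (hp : p ≠ 0) (P : MvPolynomial ℕ ℚ)
    (hP0 : ∀ d, coeff d P ≠ 0 → d 0 = 0) :
    coeff (Finsupp.single x 1)
        (aeval (fun m => (monomial (E1 p x m) (c1 p m) : MvPolynomial (Fin 3) ℚ)) P)
      = coeff (Finsupp.single p 1) P := by
  rw [coeff_aeval_monomials]
  rw [show (∑ d ∈ P.support, coeff d P *
      (if (d.sum fun m e => e • E1 p x m) = Finsupp.single x 1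
        then d.prod fun m e => c1 p m ^ e else 0))
    = ∑ d ∈ P.support, (if d = Finsupp.single p 1 then coeff d P else 0) from ?_,
    sum_indicator_collapse]
  refine Finset.sum_congr rfl fun d hd => ?_
  have hd0 : d 0 = 0 := hP0 d (MvPolynomial.mem_support_iff.mp hd)
  by_cases hss : ∀ m, d m ≠ 0 → m = p
  · have hrep := repr5 (show p ≠ p+1 by omega) (show p ≠ p+2 by omega) (show p ≠ p+3 by omega)
      (show p ≠ p+4 by omega) (show p+1 ≠ p+2 by omega) (show p+1 ≠ p+3 by omega)
      (show p+1 ≠ p+4 by omega) (show p+2 ≠ p+3 by omega) (show p+2 ≠ p+4 by omega)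
      (show p+3 ≠ p+4 by omega) d (fun m hm => Or.inl (hss m hm))
    have hz1 : d (p+1) = 0 := by by_contra hc; have := hss _ hc; omega
    have hz2 : d (p+2) = 0 := by by_contra hc; have := hss _ hc; omega
    have hz3 : d (p+3) = 0 := by by_contra hc; have := hss _ hc; omega
    have hz4 : d (p+4) = 0 := by by_contra hc; have := hss _ hc; omega
    have hsum : (d.sum fun m e => e • E1 p x m) = Finsupp.single x (d p) := by
      conv_lhs => rw [hrep]
      rw [sum5, hz1, hz2, hz3, hz4]
      simp [E1, Finsupp.smul_single]
    have hprod : (d.prod fun m e => c1 p m ^ e) = 1 := by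
      rw [Finsupp.prod]
      apply Finset.prod_eq_one
      intro m hm
      have := hss m (Finsupp.mem_support_iff.mp hm)
      subst this
      simp [c1]
    rw [hsum, hprod]
    have hiff : (Finsupp.single x (d p) = Finsupp.single x 1) ↔ d p = 1 := by
      constructor
      · intro h
        have := DFunLike.congr_fun h x
        simpa using this
      · intro h; rw [h]
    simp only [hiff]
    by_cases hq : d p = 1
    · have hD : d = Finsupp.single p 1 := by
        conv_lhs => rw [hrep]
        rw [hq, hz1, hz2, hz3, hz4]
        simp
      rw [if_pos hq, mul_one, if_pos hD, hD]
    · have hne : d ≠ Finsupp.single p 1 := fun h => hq (by rw [h, Finsupp.single_eq_same])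
      rw [if_neg hq, mul_zero, if_neg hne]
  · push_neg at hss
    obtain ⟨m, hm, hmp⟩ := hss
    have hm0 : m ≠ 0 := fun h => hm (h ▸ hd0)
    have hprod : (d.prod fun m e => c1 p m ^ e) = 0 := by
      apply Finset.prod_eq_zero (Finsupp.mem_support_iff.mpr hm)
      show c1 p m ^ d m = 0
      rw [show c1 p m = 0 by simp [c1, hm0, hmp], zero_pow hm]
    rw [hprod, ite_self, mul_zero, if_neg]
    intro h
    apply hm
    rw [h, Finsupp.single_apply, if_neg (fun hc => hmp hc.symm)]

private lemma coeff_two_pt (p q : ℕ) (x y : Fin 3) (hp : p ≠ 0) (hq : q ≠ 0) (hpq : p ≠ q)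
    (hxy : x ≠ y) (P : MvPolynomial ℕ ℚ) (hP0 : ∀ d, coeff d P ≠ 0 → d 0 = 0) :
    coeff (Finsupp.single x 1 + Finsupp.single y 1)
        (aeval (fun m => (monomial (E2 p q x y m) (c2' p q m) : MvPolynomial (Fin 3) ℚ)) P)
      = coeff (Finsupp.single p 1 + Finsupp.single q 1) P := by
  rw [coeff_aeval_monomials]
  rw [show (∑ d ∈ P.support, coeff d P *
      (if (d.sum fun m e => e • E2 p q x y m) = Finsupp.single x 1 + Finsupp.single y 1
        then d.prod fun m e => c2' p q m ^ e else 0))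
    = ∑ d ∈ P.support,
        (if d = Finsupp.single p 1 + Finsupp.single q 1 then coeff d P else 0) from ?_,
    sum_indicator_collapse]
  refine Finset.sum_congr rfl fun d hd => ?_
  have hd0 : d 0 = 0 := hP0 d (MvPolynomial.mem_support_iff.mp hd)
  have hDval : ∀ m : ℕ, (Finsupp.single p 1 + Finsupp.single q 1 : ℕ →₀ ℕ) m
      = (if p = m then 1 else 0) + (if q = m then 1 else 0) := by
    intro m; simp [Finsupp.single_apply]
  by_cases hss : ∀ m, d m ≠ 0 → m = p ∨ m = q
  · set M := max p q + 1 with hM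
    have hrep := repr5 hpq (show p ≠ M by omega) (show p ≠ M+1 by omega)
      (show p ≠ M+2 by omega) (show q ≠ M by omega) (show q ≠ M+1 by omega)
      (show q ≠ M+2 by omega) (show M ≠ M+1 by omega) (show M ≠ M+2 by omega)
      (show M+1 ≠ M+2 by omega) d (fun m hm => by rcases hss m hm with h | h <;> tauto)
    have hz1 : d M = 0 := by by_contra hc; rcases hss _ hc with h | h <;> omega
    have hz2 : d (M+1) = 0 := by by_contra hc; rcases hss _ hc with h | h <;> omega
    have hz3 : d (M+2) = 0 := by by_contra hc; rcases hss _ hc with h | h <;> omega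
    have hsum : (d.sum fun m e => e • E2 p q x y m)
        = Finsupp.single x (d p) + Finsupp.single y (d q) := by
      conv_lhs => rw [hrep]
      rw [sum5, hz1, hz2, hz3]
      simp [E2, hpq, Ne.symm hpq, Finsupp.smul_single]
    have hprod : (d.prod fun m e => c2' p q m ^ e) = 1 := by
      rw [Finsupp.prod]
      apply Finset.prod_eq_one
      intro m hm
      rcases hss m (Finsupp.mem_support_iff.mp hm) with h | h <;> subst h <;> simp [c2']
    rw [hsum, hprod]
    simp only [pair_single_eq hxy]
    by_cases hq2 : d p = 1 ∧ d q = 1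
    · have hD : d = Finsupp.single p 1 + Finsupp.single q 1 := by
        conv_lhs => rw [hrep]
        rw [hq2.1, hq2.2, hz1, hz2, hz3]
        simp
      rw [if_pos hq2, mul_one, if_pos hD, hD]
    · have hne : d ≠ Finsupp.single p 1 + Finsupp.single q 1 := by
        intro h
        apply hq2
        have h1 := DFunLike.congr_fun h p
        have h2 := DFunLike.congr_fun h q
        rw [hDval] at h1 h2
        constructor
        · rw [h1]; split_ifs <;> omega
        · rw [h2]; split_ifs <;> omega
      rw [if_neg hq2, mul_zero, if_neg hne]
  · push_neg at hss
    obtain ⟨m, hm, hmp, hmq⟩ := hss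
    have hm0 : m ≠ 0 := fun h => hm (h ▸ hd0)
    have hprod : (d.prod fun m e => c2' p q m ^ e) = 0 := by
      apply Finset.prod_eq_zero (Finsupp.mem_support_iff.mpr hm)
      show c2' p q m ^ d m = 0
      rw [show c2' p q m = 0 by simp [c2', hm0, hmp, hmq], zero_pow hm]
    rw [hprod, ite_self, mul_zero, if_neg]
    intro h
    apply hm
    rw [h, hDval, if_neg (fun hc => hmp hc.symm), if_neg (fun hc => hmq hc.symm)]
private noncomputable def fB (s t : ℕ) : ℕ ⊕ ℕ → MvPolynomial (Fin 3) ℚ :=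
  Sum.elim (fun m => if m = s then X 0 else 0) (fun m => if m = t then X 2 else 0)

private noncomputable def EB (s t : ℕ) : ℕ → Fin 3 →₀ ℕ := fun m =>
  if m = s then Finsupp.single 0 1 else if m = t then Finsupp.single 2 1
  else if m = s + t then Finsupp.single 0 1 + Finsupp.single 2 1 else 0

private def cB (s t : ℕ) : ℕ → ℚ := fun m =>
  if m = 0 ∨ m = s ∨ m = t ∨ m = s + t then 1 else 0

private lemma fB_pFst (s t : ℕ) (hs : 0 < s) (m : ℕ) :
    aeval (fB s t) (pFst m) = monomial (E1 s 0 m) (c1 s m) := by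
  rw [pFst]
  rcases eq_or_ne m 0 with rfl | h0
  · have h1 : ¬ (0:ℕ) = s := by omega
    rw [if_pos rfl, map_one]
    simp [E1, c1, h1]
  · rw [if_neg h0, aeval_X]
    simp only [fB, Sum.elim_inl]
    rcases eq_or_ne m s with rfl | hms
    · simp [E1, c1, Xmono, h0]
    · simp [E1, c1, h0, hms]

private lemma fB_pSnd (s t : ℕ) (ht : 0 < t) (m : ℕ) :
    aeval (fB s t) (pSnd m) = monomial (E1 t 2 m) (c1 t m) := by
  rw [pSnd]
  rcases eq_or_ne m 0 with rfl | h0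
  · have h1 : ¬ (0:ℕ) = t := by omega
    rw [if_pos rfl, map_one]
    simp [E1, c1, h1]
  · rw [if_neg h0, aeval_X]
    simp only [fB, Sum.elim_inr]
    rcases eq_or_ne m t with rfl | hmt
    · simp [E1, c1, Xmono, h0]
    · simp [E1, c1, h0, hmt]

private lemma fB_pProd (s t : ℕ) (hs : 0 < s) (hst : s < t) (m : ℕ) :
    aeval (fB s t) (pProd m) = monomial (EB s t m) (cB s t m) := by
  have ht : 0 < t := hs.trans hst
  rw [pProd, map_sum]
  have key : ∀ a ∈ Finset.range (m+1),
      aeval (fB s t) (pFst a * pSnd (m - a))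
        = (if a = 0 then (monomial (E1 t 2 m) (c1 t m) : MvPolynomial (Fin 3) ℚ) else 0)
          + (if a = s then X 0 * monomial (E1 t 2 (m-s)) (c1 t (m-s)) else 0) := by
    intro a _
    rw [map_mul, fB_pFst s t hs, fB_pSnd s t ht]
    rcases eq_or_ne a 0 with ha | h0
    · rw [ha]
      have h1 : ¬ (0:ℕ) = s := by omega
      have h2 : E1 s 0 0 = 0 := by simp [E1, h1]
      have h3 : c1 s 0 = 1 := by simp [c1]
      have h4 : ¬ (0:ℕ) = s := by omega
      rw [h2, h3, if_pos rfl, if_neg h4, add_zero, Nat.sub_zero]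
      simp
    · rcases eq_or_ne a s with has | has
      · rw [has]
        have h2 : E1 s 0 s = Finsupp.single 0 1 := by simp [E1]
        have h3 : c1 s s = 1 := by simp [c1]
        have h4 : ¬ s = 0 := by omega
        rw [h2, h3, if_neg h4, if_pos rfl, zero_add, ← Xmono]
      · have h2 : E1 s 0 a = 0 := by simp [E1, has]
        have h3 : c1 s a = 0 := by simp [c1, h0, has]
        rw [h2, h3, if_neg h0, if_neg has, add_zero]
        simp
  rw [Finset.sum_congr rfl key, Finset.sum_add_distrib, Finset.sum_ite_eq', Finset.sum_ite_eq']
  simp only [Finset.mem_range]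
  have hz : (0:ℕ) < m + 1 := by omega
  rw [if_pos hz]
  rcases eq_or_ne m 0 with rfl | hm0
  · have h1 : ¬ (0:ℕ) = t := by omega
    have h2 : ¬ s < 0 + 1 := by omega
    have h3 : ¬ (0:ℕ) = s := by omega
    have h4 : ¬ (0:ℕ) = s + t := by omega
    rw [if_neg h2]
    simp [E1, c1, EB, cB, h1, h3, h4]
  rcases eq_or_ne m s with hms | hms
  · rw [hms]
    have h1 : ¬ s = t := by omega
    have h2 : ¬ s = 0 := by omega
    have h3 : s < s + 1 := by omega
    rw [if_pos h3]
    have h4 : E1 t 2 s = 0 := by simp [E1, h1]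
    have h5 : c1 t s = 0 := by simp [c1, h1, h2]
    have h6 : E1 t 2 (s - s) = 0 := by
      have : s - s = 0 := by omega
      rw [this]; simp [E1]; omega
    have h7 : c1 t (s - s) = 1 := by
      have : s - s = 0 := by omega
      rw [this]; simp [c1]
    rw [h4, h5, h6, h7]
    have h8 : EB s t s = Finsupp.single 0 1 := by simp [EB]
    have h9 : cB s t s = 1 := by simp [cB]
    rw [h8, h9]
    simp [Xmono, monomial_mul]
  rcases eq_or_ne m t with hmt | hmt
  · rw [hmt]
    have h1 : s < t + 1 := by omega
    rw [if_pos h1]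
    have h2 : E1 t 2 t = Finsupp.single 2 1 := by simp [E1]
    have h3 : c1 t t = 1 := by simp [c1]
    have h4 : ¬ t - s = t := by omega
    have h5 : ¬ t - s = 0 := by omega
    have h6 : E1 t 2 (t - s) = 0 := by simp [E1, h4]
    have h7 : c1 t (t - s) = 0 := by simp [c1, h4, h5]
    have h8 : EB s t t = Finsupp.single 2 1 := by
      have : ¬ t = s := by omega
      simp [EB, this]
    have h9 : cB s t t = 1 := by simp [cB]
    rw [h2, h3, h6, h7, h8, h9]
    simp
  rcases eq_or_ne m (s + t) with hmst | hmst
  · rw [hmst]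
    have h1 : s < s + t + 1 := by omega
    rw [if_pos h1]
    have h0 : ¬ s + t = t := by omega
    have h2 : E1 t 2 (s + t) = 0 := by simp [E1, h0, hs.ne']
    have h3 : c1 t (s + t) = 0 := by
      have : ¬ s + t = 0 := by omega
      simp [c1, h0, this, hs.ne']
    have h4 : s + t - s = t := by omega
    have h5 : EB s t (s + t) = Finsupp.single 0 1 + Finsupp.single 2 1 := by
      have e1 : ¬ s + t = s := by omega
      simp [EB, e1, h0, hs.ne', ht.ne']
    have h6 : cB s t (s + t) = 1 := by simp [cB]
    rw [h2, h3, h4, h5, h6]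
    have h7 : E1 t 2 t = Finsupp.single 2 1 := by simp [E1]
    have h8 : c1 t t = 1 := by simp [c1]
    rw [h7, h8]
    simp [Xmono, monomial_mul]
  · have h1 : E1 t 2 m = 0 := by simp [E1, hmt]
    have h2 : c1 t m = 0 := by simp [c1, hm0, hmt]
    have h3 : EB s t m = 0 := by simp [EB, hms, hmt, hmst]
    have h4 : cB s t m = 0 := by simp [cB, hm0, hms, hmt, hmst]
    rw [h1, h2, h3, h4]
    have h5 : ∀ b : ℕ, E1 t 2 (m - s) = E1 t 2 (m - s) := fun _ => rfl
    have h6 : c1 t (m - s) ^ 1 = c1 t (m - s) := pow_one _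
    have h7 : (if s < m + 1 then X 0 * monomial (E1 t 2 (m-s)) (c1 t (m-s)) else 0)
        = (0 : MvPolynomial (Fin 3) ℚ) := by
      split_ifs with h
      · have e1 : ¬ m - s = t := by omega
        have e2 : ¬ m - s = 0 := by omega
        have e3 : E1 t 2 (m - s) = 0 := by simp [E1, e1]
        have e4 : c1 t (m - s) = 0 := by simp [c1, e1, e2]
        rw [e3, e4]
        simp
      · rfl
    rw [h7]
    simp
private lemma identityB (L : ℕ → MvPolynomial ℕ ℚ) (hL : IsMultiplicativeSeq L)
    (s t : ℕ) (hs : 0 < s) (hst : s < t) :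
    coeff (Finsupp.single s 1 + Finsupp.single t 1) (L (s+t))
      + coeff (Finsupp.single (s+t) 1) (L (s+t))
      = coeff (Finsupp.single s 1) (L s) * coeff (Finsupp.single t 1) (L t) := by
  obtain ⟨-, h0, hw, hmul⟩ := hL
  have ht : 0 < t := hs.trans hst
  have key' := congrArg (aeval (fB s t)) (hmul (s+t))
  rw [map_sum] at key'
  simp only [map_mul, comp_aeval_apply, fB_pProd s t hs hst, fB_pFst s t hs,
    fB_pSnd s t ht] at key'
  have hco := congrArg
    (coeff (Finsupp.single 0 1 + Finsupp.single 1 0 + Finsupp.single 2 1)) key'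
  rw [coeff_sum] at hco
  have hu : (Finsupp.single 0 1 + Finsupp.single 1 0 + Finsupp.single 2 1 : Fin 3 →₀ ℕ)
      = Finsupp.single 0 1 + Finsupp.single 2 1 := by
    rw [Finsupp.single_zero, add_zero]
  have vD1 : ∀ m : ℕ, (Finsupp.single s 1 + Finsupp.single t 1 : ℕ →₀ ℕ) m
      = (if s = m then 1 else 0) + (if t = m then 1 else 0) := by
    intro m; simp [Finsupp.single_apply]
  have vD2 : ∀ m : ℕ, (Finsupp.single (s+t) 1 : ℕ →₀ ℕ) m
      = (if s + t = m then 1 else 0) := by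
    intro m; simp [Finsupp.single_apply]
  -- LHS computation
  have hLHS : coeff (Finsupp.single 0 1 + Finsupp.single 1 0 + Finsupp.single 2 1)
      (aeval (fun m => (monomial (EB s t m) (cB s t m) : MvPolynomial (Fin 3) ℚ)) (L (s+t)))
      = coeff (Finsupp.single s 1 + Finsupp.single t 1) (L (s+t))
        + coeff (Finsupp.single (s+t) 1) (L (s+t)) := by
    rw [hu, coeff_aeval_monomials]
    rw [show (∑ d ∈ (L (s+t)).support, coeff d (L (s+t)) *
        (if (d.sum fun m e => e • EB s t m) = Finsupp.single 0 1 + Finsupp.single 2 1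
          then d.prod fun m e => cB s t m ^ e else 0))
      = ∑ d ∈ (L (s+t)).support,
          ((if d = Finsupp.single s 1 + Finsupp.single t 1 then coeff d (L (s+t)) else 0)
            + (if d = Finsupp.single (s+t) 1 then coeff d (L (s+t)) else 0)) from ?_,
      Finset.sum_add_distrib, sum_indicator_collapse, sum_indicator_collapse]
    refine Finset.sum_congr rfl fun d hd => ?_
    have hd0 : d 0 = 0 := h0 _ d (MvPolynomial.mem_support_iff.mp hd)
    by_cases hss : ∀ m, d m ≠ 0 → m = s ∨ m = t ∨ m = s + t
    · have hrep := repr5 (show s ≠ t by omega) (show s ≠ s+t by omega)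
        (show s ≠ s+t+1 by omega) (show s ≠ s+t+2 by omega) (show t ≠ s+t by omega)
        (show t ≠ s+t+1 by omega) (show t ≠ s+t+2 by omega) (show s+t ≠ s+t+1 by omega)
        (show s+t ≠ s+t+2 by omega) (show s+t+1 ≠ s+t+2 by omega) d
        (fun m hm => by rcases hss m hm with h | h | h <;> tauto)
      have hz1 : d (s+t+1) = 0 := by
        by_contra hc; rcases hss _ hc with h | h | h <;> omega
      have hz2 : d (s+t+2) = 0 := by
        by_contra hc; rcases hss _ hc with h | h | h <;> omega
      have e1 : EB s t s = Finsupp.single 0 1 := by simp [EB]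
      have e2 : EB s t t = Finsupp.single 2 1 := by
        have a1 : ¬ t = s := by omega
        simp [EB, a1]
      have e3 : EB s t (s+t) = Finsupp.single 0 1 + Finsupp.single 2 1 := by
        have a1 : ¬ s+t = s := by omega
        have a2 : ¬ s+t = t := by omega
        simp [EB, a1, a2, hs.ne', ht.ne']
      have e4 : EB s t (s+t+1) = 0 := by
        have a1 : ¬ s+t+1 = s := by omega
        have a2 : ¬ s+t+1 = t := by omega
        have a3 : ¬ s+t+1 = s+t := by omega
        simp [EB, a1, a2, a3]
      have e5 : EB s t (s+t+2) = 0 := by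
        have a1 : ¬ s+t+2 = s := by omega
        have a2 : ¬ s+t+2 = t := by omega
        have a3 : ¬ s+t+2 = s+t := by omega
        simp [EB, a1, a2, a3]
      have hsum : (d.sum fun m e => e • EB s t m)
          = Finsupp.single 0 (d s + d (s+t)) + Finsupp.single 2 (d t + d (s+t)) := by
        conv_lhs => rw [hrep]
        rw [sum5, e1, e2, e3, e4, e5]
        simp only [smul_zero, add_zero, smul_add, Finsupp.smul_single, smul_eq_mul, mul_one]
        rw [Finsupp.single_add, Finsupp.single_add]
        abel
      have hprod : (d.prod fun m e => cB s t m ^ e) = 1 := by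
        rw [Finsupp.prod]
        apply Finset.prod_eq_one
        intro m hm
        rcases hss m (Finsupp.mem_support_iff.mp hm) with h | h | h <;> subst h <;> simp [cB]
      rw [hsum, hprod]
      simp only [pair_single_eq (show (0 : Fin 3) ≠ 2 by decide)]
      by_cases hq : d s + d (s+t) = 1 ∧ d t + d (s+t) = 1
      · rcases (show (d s = 1 ∧ d t = 1 ∧ d (s+t) = 0) ∨ (d s = 0 ∧ d t = 0 ∧ d (s+t) = 1)
            by omega) with ⟨ha, hb, hc⟩ | ⟨ha, hb, hc⟩
        · have hD : d = Finsupp.single s 1 + Finsupp.single t 1 := by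
            conv_lhs => rw [hrep]
            rw [ha, hb, hc, hz1, hz2]
            simp
          have hne2 : d ≠ Finsupp.single (s+t) 1 := by
            rw [hD]; intro h
            have hq1 := DFunLike.congr_fun h s
            rw [vD1, vD2] at hq1
            split_ifs at hq1 <;> omega
          rw [if_pos hq, mul_one, if_pos hD, if_neg hne2, add_zero]
        · have hD : d = Finsupp.single (s+t) 1 := by
            conv_lhs => rw [hrep]
            rw [ha, hb, hc, hz1, hz2]
            simp
          have hne1 : d ≠ Finsupp.single s 1 + Finsupp.single t 1 := by
            rw [hD]; intro h
            have hq1 := DFunLike.congr_fun h s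
            rw [vD1, vD2] at hq1
            split_ifs at hq1 <;> omega
          rw [if_pos hq, mul_one, if_neg hne1, if_pos hD, zero_add]
      · have hne1 : d ≠ Finsupp.single s 1 + Finsupp.single t 1 := by
          intro h
          apply hq
          have q1 := DFunLike.congr_fun h s
          have q2 := DFunLike.congr_fun h t
          have q3 := DFunLike.congr_fun h (s+t)
          rw [vD1] at q1 q2 q3
          refine ⟨?_, ?_⟩ <;> split_ifs at q1 q2 q3 <;> omega
        have hne2 : d ≠ Finsupp.single (s+t) 1 := by
          intro h
          apply hq
          have q1 := DFunLike.congr_fun h s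
          have q2 := DFunLike.congr_fun h t
          have q3 := DFunLike.congr_fun h (s+t)
          rw [vD2] at q1 q2 q3
          refine ⟨?_, ?_⟩ <;> split_ifs at q1 q2 q3 <;> omega
        rw [if_neg hq, mul_zero, if_neg hne1, if_neg hne2, add_zero]
    · push_neg at hss
      obtain ⟨m, hm, hm1, hm2, hm3⟩ := hss
      have hm0 : m ≠ 0 := fun h => hm (h ▸ hd0)
      have hprod : (d.prod fun m e => cB s t m ^ e) = 0 := by
        apply Finset.prod_eq_zero (Finsupp.mem_support_iff.mpr hm)
        show cB s t m ^ d m = 0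
        rw [show cB s t m = 0 by simp [cB, hm0, hm1, hm2, hm3], zero_pow hm]
      have hne1 : d ≠ Finsupp.single s 1 + Finsupp.single t 1 := by
        intro h
        apply hm
        rw [h, vD1, if_neg (fun hc => hm1 hc.symm), if_neg (fun hc => hm2 hc.symm)]
      have hne2 : d ≠ Finsupp.single (s+t) 1 := by
        intro h
        apply hm
        rw [h, vD2, if_neg (fun hc => hm3 hc.symm)]
      rw [hprod, ite_self, mul_zero, if_neg hne1, if_neg hne2, add_zero]
  -- RHS computation
  have hE2a : ∀ m, E1 s 0 m 2 = 0 := by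
    intro m
    simp only [E1]
    split_ifs <;> simp [Finsupp.single_apply]
  have hE2b : ∀ m, E1 t 2 m 0 = 0 := by
    intro m
    simp only [E1]
    split_ifs <;> simp [Finsupp.single_apply]
  have hE2c : ∀ m, E1 t 2 m 1 = 0 := by
    intro m
    simp only [E1]
    split_ifs <;> simp [Finsupp.single_apply]
  have hR : ∀ a ∈ Finset.range (s+t+1),
      coeff (Finsupp.single 0 1 + Finsupp.single 1 0 + Finsupp.single 2 1)
        ((aeval (fun i => (monomial (E1 s 0 i) (c1 s i) : MvPolynomial (Fin 3) ℚ))) (L a)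
          * (aeval (fun i => (monomial (E1 t 2 i) (c1 t i) : MvPolynomial (Fin 3) ℚ)))
              (L (s+t-a)))
        = coeff (Finsupp.single s 1) (L a) * coeff (Finsupp.single t 1) (L (s+t-a)) := by
    intro a _
    rw [coeff_mul_split _ _ 1 0 1
      (fun v hv => vanish_at _ _ 2 hE2a _ v hv)
      (fun w hw' => by
        rcases hw' with hw' | hw'
        · exact vanish_at _ _ 0 hE2b _ w hw'
        · exact vanish_at _ _ 1 hE2c _ w hw')]
    rw [Finsupp.single_zero, add_zero]
    rw [coeff_single_pt s 0 (by omega) _ (h0 a), coeff_single_pt t 2 (by omega) _ (h0 _)]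
  rw [Finset.sum_congr rfl hR] at hco
  have hcollapse : (∑ a ∈ Finset.range (s+t+1),
      coeff (Finsupp.single s 1) (L a) * coeff (Finsupp.single t 1) (L (s+t-a)))
      = coeff (Finsupp.single s 1) (L s) * coeff (Finsupp.single t 1) (L t) := by
    rw [Finset.sum_eq_single_of_mem s (by simp)]
    · rw [show s + t - s = t by omega]
    · intro a _ hne
      have hz : coeff (Finsupp.single s 1) (L a) = 0 := by
        by_contra hc
        have := hw a _ hc
        rw [weight_single] at this
        omega
      rw [hz, zero_mul]
  rw [hcollapse] at hco
  rw [← hLHS, hco]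
private noncomputable def fA (i j k : ℕ) : ℕ ⊕ ℕ → MvPolynomial (Fin 3) ℚ :=
  Sum.elim (fun m => if m = i then X 0 else if m = j then X 1 else 0)
    (fun m => if m = k then X 2 else 0)

private noncomputable def EP (i j k : ℕ) : ℕ → Fin 3 →₀ ℕ := fun m =>
  if m = i then Finsupp.single 0 1 else if m = j then Finsupp.single 1 1
  else if m = k then Finsupp.single 2 1
  else if m = i + k then Finsupp.single 0 1 + Finsupp.single 2 1
  else if m = j + k then Finsupp.single 1 1 + Finsupp.single 2 1 else 0

private def cP (i j k : ℕ) : ℕ → ℚ := fun m =>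
  if m = 0 ∨ m = i ∨ m = j ∨ m = k ∨ m = i + k ∨ m = j + k then 1 else 0

private lemma fA_pFst (i j k : ℕ) (hi : 0 < i) (hij : i < j) (m : ℕ) :
    aeval (fA i j k) (pFst m) = monomial (E2 i j 0 1 m) (c2' i j m) := by
  rw [pFst]
  rcases eq_or_ne m 0 with h | h0
  · rw [h, if_pos rfl, map_one]
    have a1 : ¬ (0:ℕ) = i := by omega
    have a2 : ¬ (0:ℕ) = j := by omega
    simp [E2, c2', a1, a2]
  · rw [if_neg h0, aeval_X]
    simp only [fA, Sum.elim_inl]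
    rcases eq_or_ne m i with h | hmi
    · rw [h]
      simp [E2, c2', Xmono]
    · rcases eq_or_ne m j with h | hmj
      · rw [h]
        have a1 : ¬ j = i := by omega
        simp [E2, c2', a1, Xmono]
      · simp [E2, c2', h0, hmi, hmj]

private lemma fA_pSnd (i j k : ℕ) (hk : 0 < k) (m : ℕ) :
    aeval (fA i j k) (pSnd m) = monomial (E1 k 2 m) (c1 k m) := by
  rw [pSnd]
  rcases eq_or_ne m 0 with h | h0
  · rw [h, if_pos rfl, map_one]
    have a1 : ¬ (0:ℕ) = k := by omega
    simp [E1, c1, a1]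
  · rw [if_neg h0, aeval_X]
    simp only [fA, Sum.elim_inr]
    rcases eq_or_ne m k with h | hmk
    · rw [h]
      simp [E1, c1, Xmono]
    · simp [E1, c1, h0, hmk]

private lemma fA_pProd (i j k : ℕ) (hi : 0 < i) (hij : i < j) (hjk : j < k) (m : ℕ) :
    aeval (fA i j k) (pProd m) = monomial (EP i j k m) (cP i j k m) := by
  have hk : 0 < k := by omega
  rw [pProd, map_sum]
  have key : ∀ a ∈ Finset.range (m+1),
      aeval (fA i j k) (pFst a * pSnd (m - a))
        = (if a = 0 then (monomial (E1 k 2 m) (c1 k m) : MvPolynomial (Fin 3) ℚ) else 0)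
          + (if a = i then X 0 * monomial (E1 k 2 (m-i)) (c1 k (m-i)) else 0)
          + (if a = j then X 1 * monomial (E1 k 2 (m-j)) (c1 k (m-j)) else 0) := by
    intro a _
    rw [map_mul, fA_pFst i j k hi hij, fA_pSnd i j k hk]
    rcases eq_or_ne a 0 with ha | h0
    · rw [ha]
      have a1 : ¬ (0:ℕ) = i := by omega
      have a2 : ¬ (0:ℕ) = j := by omega
      have h2 : E2 i j 0 1 0 = 0 := by simp [E2, a1, a2]
      have h3 : c2' i j 0 = 1 := by simp [c2']
      rw [h2, h3, if_pos rfl, if_neg a1, if_neg a2, add_zero, add_zero, Nat.sub_zero]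
      simp
    · rcases eq_or_ne a i with ha | hai
      · rw [ha]
        have a1 : ¬ i = 0 := by omega
        have a2 : ¬ i = j := by omega
        have h2 : E2 i j 0 1 i = Finsupp.single 0 1 := by simp [E2]
        have h3 : c2' i j i = 1 := by simp [c2']
        rw [h2, h3, if_neg a1, if_pos rfl, if_neg a2, zero_add, add_zero, ← Xmono]
      · rcases eq_or_ne a j with ha | haj
        · rw [ha]
          have a1 : ¬ j = 0 := by omega
          have a2 : ¬ j = i := by omega
          have h2 : E2 i j 0 1 j = Finsupp.single 1 1 := by simp [E2, a2]
          have h3 : c2' i j j = 1 := by simp [c2']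
          rw [h2, h3, if_neg a1, if_neg a2, if_pos rfl, zero_add, zero_add, ← Xmono]
        · have h2 : E2 i j 0 1 a = 0 := by simp [E2, hai, haj]
          have h3 : c2' i j a = 0 := by simp [c2', h0, hai, haj]
          rw [h2, h3, if_neg h0, if_neg hai, if_neg haj, add_zero, add_zero]
          simp
  rw [Finset.sum_congr rfl key, Finset.sum_add_distrib, Finset.sum_add_distrib,
    Finset.sum_ite_eq', Finset.sum_ite_eq', Finset.sum_ite_eq']
  simp only [Finset.mem_range]
  have hz : (0:ℕ) < m + 1 := by omega
  rw [if_pos hz]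
  rcases eq_or_ne m 0 with hm | hm0
  · rw [hm]
    have b1 : ¬ i < 0 + 1 := by omega
    have b2 : ¬ j < 0 + 1 := by omega
    rw [if_neg b1, if_neg b2, add_zero, add_zero]
    have a1 : ¬ (0:ℕ) = k := by omega
    have a2 : E1 k 2 0 = 0 := by simp [E1, a1]
    have a3 : c1 k 0 = 1 := by simp [c1]
    have a4 : EP i j k 0 = 0 := by
      have n1 : ¬ (0:ℕ) = i := by omega
      have n2 : ¬ (0:ℕ) = j := by omega
      have n3 : ¬ (0:ℕ) = i + k := by omega
      have n4 : ¬ (0:ℕ) = j + k := by omega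
      simp [EP, n1, n2, a1, n3, n4]
    have a5 : cP i j k 0 = 1 := by simp [cP]
    rw [a2, a3, a4, a5]
  rcases eq_or_ne m i with hm | hmi
  · rw [hm]
    have b1 : i < i + 1 := by omega
    have b2 : ¬ j < i + 1 := by omega
    rw [if_pos b1, if_neg b2, add_zero]
    have a1 : ¬ i = k := by omega
    have a2 : ¬ i = 0 := by omega
    have e1 : E1 k 2 i = 0 := by simp [E1, a1]
    have e2 : c1 k i = 0 := by simp [c1, a1, a2]
    have e3 : i - i = 0 := by omega
    have a3 : ¬ (0:ℕ) = k := by omega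
    have e4 : E1 k 2 0 = 0 := by simp [E1, a3]
    have e5 : c1 k 0 = 1 := by simp [c1]
    have e6 : EP i j k i = Finsupp.single 0 1 := by simp [EP]
    have e7 : cP i j k i = 1 := by simp [cP]
    rw [e1, e2, e3, e4, e5, e6, e7]
    simp [Xmono, monomial_mul]
  rcases eq_or_ne m j with hm | hmj
  · rw [hm]
    have b1 : i < j + 1 := by omega
    have b2 : j < j + 1 := by omega
    rw [if_pos b1, if_pos b2]
    have a1 : ¬ j = k := by omega
    have a2 : ¬ j = 0 := by omega
    have e1 : E1 k 2 j = 0 := by simp [E1, a1]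
    have e2 : c1 k j = 0 := by simp [c1, a1, a2]
    have n1 : ¬ j - i = k := by omega
    have n2 : ¬ j - i = 0 := by omega
    have e3 : E1 k 2 (j - i) = 0 := by simp [E1, n1]
    have e4 : c1 k (j - i) = 0 := by simp [c1, n1, n2]
    have e5 : j - j = 0 := by omega
    have a3 : ¬ (0:ℕ) = k := by omega
    have e6 : E1 k 2 0 = 0 := by simp [E1, a3]
    have e7 : c1 k 0 = 1 := by simp [c1]
    have a4 : ¬ j = i := by omega
    have e8 : EP i j k j = Finsupp.single 1 1 := by simp [EP, a4]
    have e9 : cP i j k j = 1 := by simp [cP]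
    rw [e1, e2, e3, e4, e5, e6, e7, e8, e9]
    simp [Xmono, monomial_mul]
  rcases eq_or_ne m k with hm | hmk
  · rw [hm]
    have b1 : i < k + 1 := by omega
    have b2 : j < k + 1 := by omega
    rw [if_pos b1, if_pos b2]
    have e1 : E1 k 2 k = Finsupp.single 2 1 := by simp [E1]
    have e2 : c1 k k = 1 := by simp [c1]
    have n1 : ¬ k - i = k := by omega
    have n2 : ¬ k - i = 0 := by omega
    have n3 : ¬ k - j = k := by omega
    have n4 : ¬ k - j = 0 := by omega
    have e3 : E1 k 2 (k - i) = 0 := by simp [E1, n1]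
    have e4 : c1 k (k - i) = 0 := by simp [c1, n1, n2]
    have e5 : E1 k 2 (k - j) = 0 := by simp [E1, n3]
    have e6 : c1 k (k - j) = 0 := by simp [c1, n3, n4]
    have a1 : ¬ k = i := by omega
    have a2 : ¬ k = j := by omega
    have e7 : EP i j k k = Finsupp.single 2 1 := by simp [EP, a1, a2]
    have e8 : cP i j k k = 1 := by simp [cP]
    rw [e1, e2, e3, e4, e5, e6, e7, e8]
    simp
  rcases eq_or_ne m (i + k) with hm | hmik
  · rw [hm]
    have b1 : i < i + k + 1 := by omega
    have b2 : j < i + k + 1 := by omega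
    rw [if_pos b1, if_pos b2]
    have n0 : ¬ i + k = k := by omega
    have n1 : ¬ i + k = 0 := by omega
    have e1 : E1 k 2 (i + k) = 0 := by simp [E1, n0, hi.ne']
    have e2 : c1 k (i + k) = 0 := by simp [c1, n0, n1, hi.ne']
    have e3 : i + k - i = k := by omega
    have e4 : E1 k 2 k = Finsupp.single 2 1 := by simp [E1]
    have e5 : c1 k k = 1 := by simp [c1]
    have n2 : ¬ i + k - j = k := by omega
    have n3 : ¬ i + k - j = 0 := by omega
    have e6 : E1 k 2 (i + k - j) = 0 := by simp [E1, n2]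
    have e7 : c1 k (i + k - j) = 0 := by simp [c1, n2, n3]
    have n4 : ¬ i + k = i := by omega
    have n5 : ¬ i + k = j := by omega
    have e8 : EP i j k (i + k) = Finsupp.single 0 1 + Finsupp.single 2 1 := by
      simp [EP, n4, n5, n0, hi.ne', hk.ne']
    have e9 : cP i j k (i + k) = 1 := by simp [cP]
    rw [e1, e2, e3, e4, e5, e6, e7, e8, e9]
    simp [Xmono, monomial_mul]
  rcases eq_or_ne m (j + k) with hm | hmjk
  · rw [hm]
    have b1 : i < j + k + 1 := by omega
    have b2 : j < j + k + 1 := by omega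
    rw [if_pos b1, if_pos b2]
    have n0 : ¬ j + k = k := by omega
    have n1 : ¬ j + k = 0 := by omega
    have e1 : E1 k 2 (j + k) = 0 := by simp [E1, n0, (show j ≠ 0 by omega)]
    have e2 : c1 k (j + k) = 0 := by simp [c1, n0, n1, (show j ≠ 0 by omega)]
    have n2 : ¬ j + k - i = k := by omega
    have n3 : ¬ j + k - i = 0 := by omega
    have e3 : E1 k 2 (j + k - i) = 0 := by simp [E1, n2]
    have e4 : c1 k (j + k - i) = 0 := by simp [c1, n2, n3]
    have e5 : j + k - j = k := by omega
    have e6 : E1 k 2 k = Finsupp.single 2 1 := by simp [E1]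
    have e7 : c1 k k = 1 := by simp [c1]
    have n4 : ¬ j + k = i := by omega
    have n5 : ¬ j + k = j := by omega
    have n6 : ¬ j + k = i + k := by omega
    have e8 : EP i j k (j + k) = Finsupp.single 1 1 + Finsupp.single 2 1 := by
      simp [EP, n4, n5, n0, n6, (show j ≠ 0 by omega), hk.ne', (show j ≠ i by omega)]
    have e9 : cP i j k (j + k) = 1 := by simp [cP]
    rw [e1, e2, e3, e4, e5, e6, e7, e8, e9]
    simp [Xmono, monomial_mul]
  · have e1 : E1 k 2 m = 0 := by simp [E1, hmk]
    have e2 : c1 k m = 0 := by simp [c1, hm0, hmk]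
    have e3 : EP i j k m = 0 := by simp [EP, hmi, hmj, hmk, hmik, hmjk]
    have e4 : cP i j k m = 0 := by simp [cP, hm0, hmi, hmj, hmk, hmik, hmjk]
    rw [e1, e2, e3, e4]
    have h7 : (if i < m + 1 then X 0 * monomial (E1 k 2 (m-i)) (c1 k (m-i)) else 0)
        = (0 : MvPolynomial (Fin 3) ℚ) := by
      split_ifs with h
      · have n1 : ¬ m - i = k := by omega
        have n2 : ¬ m - i = 0 := by omega
        have e5 : E1 k 2 (m - i) = 0 := by simp [E1, n1]
        have e6 : c1 k (m - i) = 0 := by simp [c1, n1, n2]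
        rw [e5, e6]
        simp
      · rfl
    have h8 : (if j < m + 1 then X 1 * monomial (E1 k 2 (m-j)) (c1 k (m-j)) else 0)
        = (0 : MvPolynomial (Fin 3) ℚ) := by
      split_ifs with h
      · have n1 : ¬ m - j = k := by omega
        have n2 : ¬ m - j = 0 := by omega
        have e5 : E1 k 2 (m - j) = 0 := by simp [E1, n1]
        have e6 : c1 k (m - j) = 0 := by simp [c1, n1, n2]
        rw [e5, e6]
        simp
      · rfl
    rw [h7, h8]
    simp
private lemma identityA (L : ℕ → MvPolynomial ℕ ℚ) (hL : IsMultiplicativeSeq L)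
    (i j k : ℕ) (hi : 0 < i) (hij : i < j) (hjk : j < k) :
    coeff (Finsupp.single i 1 + Finsupp.single j 1 + Finsupp.single k 1) (L (i+j+k))
      + coeff (Finsupp.single j 1 + Finsupp.single (i+k) 1) (L (i+j+k))
      + coeff (Finsupp.single i 1 + Finsupp.single (j+k) 1) (L (i+j+k))
    = coeff (Finsupp.single i 1 + Finsupp.single j 1) (L (i+j))
        * coeff (Finsupp.single k 1) (L k) := by
  obtain ⟨-, h0, hw, hmul⟩ := hL
  have hk : 0 < k := by omega
  have key' := congrArg (aeval (fA i j k)) (hmul (i+j+k))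
  rw [map_sum] at key'
  simp only [map_mul, comp_aeval_apply, fA_pProd i j k hi hij hjk, fA_pFst i j k hi hij,
    fA_pSnd i j k hk] at key'
  have hco := congrArg
    (coeff (Finsupp.single 0 1 + Finsupp.single 1 1 + Finsupp.single 2 1)) key'
  rw [coeff_sum] at hco
  have w1 : ∀ x : ℕ, (Finsupp.single i 1 + Finsupp.single j 1 + Finsupp.single k 1 : ℕ →₀ ℕ) x
      = (if i = x then 1 else 0) + (if j = x then 1 else 0) + (if k = x then 1 else 0) := by
    intro x; simp [Finsupp.single_apply]
  have w2 : ∀ x : ℕ, (Finsupp.single j 1 + Finsupp.single (i+k) 1 : ℕ →₀ ℕ) x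
      = (if j = x then 1 else 0) + (if i + k = x then 1 else 0) := by
    intro x; simp [Finsupp.single_apply]
  have w3 : ∀ x : ℕ, (Finsupp.single i 1 + Finsupp.single (j+k) 1 : ℕ →₀ ℕ) x
      = (if i = x then 1 else 0) + (if j + k = x then 1 else 0) := by
    intro x; simp [Finsupp.single_apply]
  have hLHS : coeff (Finsupp.single 0 1 + Finsupp.single 1 1 + Finsupp.single 2 1)
      (aeval (fun m => (monomial (EP i j k m) (cP i j k m) : MvPolynomial (Fin 3) ℚ))
        (L (i+j+k)))
      = coeff (Finsupp.single i 1 + Finsupp.single j 1 + Finsupp.single k 1) (L (i+j+k))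
        + coeff (Finsupp.single j 1 + Finsupp.single (i+k) 1) (L (i+j+k))
        + coeff (Finsupp.single i 1 + Finsupp.single (j+k) 1) (L (i+j+k)) := by
    rw [coeff_aeval_monomials]
    rw [show (∑ d ∈ (L (i+j+k)).support, coeff d (L (i+j+k)) *
        (if (d.sum fun m e => e • EP i j k m)
            = Finsupp.single 0 1 + Finsupp.single 1 1 + Finsupp.single 2 1
          then d.prod fun m e => cP i j k m ^ e else 0))
      = ∑ d ∈ (L (i+j+k)).support,
          ((if d = Finsupp.single i 1 + Finsupp.single j 1 + Finsupp.single k 1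
              then coeff d (L (i+j+k)) else 0)
            + (if d = Finsupp.single j 1 + Finsupp.single (i+k) 1
                then coeff d (L (i+j+k)) else 0)
            + (if d = Finsupp.single i 1 + Finsupp.single (j+k) 1
                then coeff d (L (i+j+k)) else 0)) from ?_,
      Finset.sum_add_distrib, Finset.sum_add_distrib, sum_indicator_collapse,
      sum_indicator_collapse, sum_indicator_collapse]
    refine Finset.sum_congr rfl fun d hd => ?_
    have hd0 : d 0 = 0 := h0 _ d (MvPolynomial.mem_support_iff.mp hd)
    by_cases hss : ∀ m, d m ≠ 0 → m = i ∨ m = j ∨ m = k ∨ m = i + k ∨ m = j + k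
    · have hrep := repr5 (show i ≠ j by omega) (show i ≠ k by omega)
        (show i ≠ i+k by omega) (show i ≠ j+k by omega) (show j ≠ k by omega)
        (show j ≠ i+k by omega) (show j ≠ j+k by omega) (show k ≠ i+k by omega)
        (show k ≠ j+k by omega) (show i+k ≠ j+k by omega) d hss
      have ep1 : EP i j k i = Finsupp.single 0 1 := by simp [EP]
      have ep2 : EP i j k j = Finsupp.single 1 1 := by
        have a1 : ¬ j = i := by omega
        simp [EP, a1]
      have ep3 : EP i j k k = Finsupp.single 2 1 := by
        have a1 : ¬ k = i := by omega
        have a2 : ¬ k = j := by omega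
        simp [EP, a1, a2]
      have ep4 : EP i j k (i+k) = Finsupp.single 0 1 + Finsupp.single 2 1 := by
        have a1 : ¬ i+k = i := by omega
        have a2 : ¬ i+k = j := by omega
        have a3 : ¬ i+k = k := by omega
        simp [EP, a1, a2, a3, hi.ne', hk.ne']
      have ep5 : EP i j k (j+k) = Finsupp.single 1 1 + Finsupp.single 2 1 := by
        have a1 : ¬ j+k = i := by omega
        have a2 : ¬ j+k = j := by omega
        have a3 : ¬ j+k = k := by omega
        have a4 : ¬ j+k = i+k := by omega
        simp [EP, a1, a2, a3, a4, (show j ≠ 0 by omega), hk.ne', (show j ≠ i by omega)]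
      have hsum : (d.sum fun m e => e • EP i j k m)
          = Finsupp.single 0 (d i + d (i+k)) + Finsupp.single 1 (d j + d (j+k))
            + Finsupp.single 2 (d k + d (i+k) + d (j+k)) := by
        conv_lhs => rw [hrep]
        rw [sum5, ep1, ep2, ep3, ep4, ep5]
        simp only [smul_add, Finsupp.smul_single, smul_eq_mul, mul_one]
        simp only [Finsupp.single_add]
        abel
      have hprod : (d.prod fun m e => cP i j k m ^ e) = 1 := by
        rw [Finsupp.prod]
        apply Finset.prod_eq_one
        intro m hm
        rcases hss m (Finsupp.mem_support_iff.mp hm) with h | h | h | h | h <;> subst h <;>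
          simp [cP]
      rw [hsum, hprod]
      simp only [triple_single_eq]
      by_cases hq : d i + d (i+k) = 1 ∧ d j + d (j+k) = 1 ∧ d k + d (i+k) + d (j+k) = 1
      · rcases (show (d (i+k) = 0 ∧ d (j+k) = 0 ∧ d i = 1 ∧ d j = 1 ∧ d k = 1)
            ∨ (d (i+k) = 1 ∧ d (j+k) = 0 ∧ d i = 0 ∧ d j = 1 ∧ d k = 0)
            ∨ (d (i+k) = 0 ∧ d (j+k) = 1 ∧ d i = 1 ∧ d j = 0 ∧ d k = 0) by omega)
          with ⟨a1, a2, a3, a4, a5⟩ | ⟨a1, a2, a3, a4, a5⟩ | ⟨a1, a2, a3, a4, a5⟩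
        · have hD : d = Finsupp.single i 1 + Finsupp.single j 1 + Finsupp.single k 1 := by
            conv_lhs => rw [hrep]
            rw [a1, a2, a3, a4, a5]
            simp
          have hne2 : d ≠ Finsupp.single j 1 + Finsupp.single (i+k) 1 := by
            rw [hD]; intro h
            have q := DFunLike.congr_fun h i
            rw [w1, w2] at q
            split_ifs at q <;> omega
          have hne3 : d ≠ Finsupp.single i 1 + Finsupp.single (j+k) 1 := by
            rw [hD]; intro h
            have q := DFunLike.congr_fun h j
            rw [w1, w3] at q
            split_ifs at q <;> omega
          rw [if_pos hq, mul_one, if_pos hD, if_neg hne2, if_neg hne3, add_zero, add_zero]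
        · have hD : d = Finsupp.single j 1 + Finsupp.single (i+k) 1 := by
            conv_lhs => rw [hrep]
            rw [a1, a2, a3, a4, a5]
            simp
          have hne1 : d ≠ Finsupp.single i 1 + Finsupp.single j 1 + Finsupp.single k 1 := by
            rw [hD]; intro h
            have q := DFunLike.congr_fun h i
            rw [w1, w2] at q
            split_ifs at q <;> omega
          have hne3 : d ≠ Finsupp.single i 1 + Finsupp.single (j+k) 1 := by
            rw [hD]; intro h
            have q := DFunLike.congr_fun h i
            rw [w2, w3] at q
            split_ifs at q <;> omega
          rw [if_pos hq, mul_one, if_neg hne1, if_pos hD, if_neg hne3, zero_add, add_zero]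
        · have hD : d = Finsupp.single i 1 + Finsupp.single (j+k) 1 := by
            conv_lhs => rw [hrep]
            rw [a1, a2, a3, a4, a5]
            simp
          have hne1 : d ≠ Finsupp.single i 1 + Finsupp.single j 1 + Finsupp.single k 1 := by
            rw [hD]; intro h
            have q := DFunLike.congr_fun h j
            rw [w3, w1] at q
            split_ifs at q <;> omega
          have hne2 : d ≠ Finsupp.single j 1 + Finsupp.single (i+k) 1 := by
            rw [hD]; intro h
            have q := DFunLike.congr_fun h i
            rw [w3, w2] at q
            split_ifs at q <;> omega
          rw [if_pos hq, mul_one, if_neg hne1, if_neg hne2, if_pos hD, zero_add, zero_add]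
      · have hne1 : d ≠ Finsupp.single i 1 + Finsupp.single j 1 + Finsupp.single k 1 := by
          intro h
          apply hq
          have q1 := DFunLike.congr_fun h i
          have q2 := DFunLike.congr_fun h j
          have q3 := DFunLike.congr_fun h k
          have q4 := DFunLike.congr_fun h (i+k)
          have q5 := DFunLike.congr_fun h (j+k)
          rw [w1] at q1 q2 q3 q4 q5
          have v1 : d i = 1 := by rw [q1]; split_ifs <;> omega
          have v2 : d j = 1 := by rw [q2]; split_ifs <;> omega
          have v3 : d k = 1 := by rw [q3]; split_ifs <;> omega
          have v4 : d (i+k) = 0 := by rw [q4]; split_ifs <;> omega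
          have v5 : d (j+k) = 0 := by rw [q5]; split_ifs <;> omega
          exact ⟨by omega, by omega, by omega⟩
        have hne2 : d ≠ Finsupp.single j 1 + Finsupp.single (i+k) 1 := by
          intro h
          apply hq
          have q1 := DFunLike.congr_fun h i
          have q2 := DFunLike.congr_fun h j
          have q3 := DFunLike.congr_fun h k
          have q4 := DFunLike.congr_fun h (i+k)
          have q5 := DFunLike.congr_fun h (j+k)
          rw [w2] at q1 q2 q3 q4 q5
          have v1 : d i = 0 := by rw [q1]; split_ifs <;> omega
          have v2 : d j = 1 := by rw [q2]; split_ifs <;> omega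
          have v3 : d k = 0 := by rw [q3]; split_ifs <;> omega
          have v4 : d (i+k) = 1 := by rw [q4]; split_ifs <;> omega
          have v5 : d (j+k) = 0 := by rw [q5]; split_ifs <;> omega
          exact ⟨by omega, by omega, by omega⟩
        have hne3 : d ≠ Finsupp.single i 1 + Finsupp.single (j+k) 1 := by
          intro h
          apply hq
          have q1 := DFunLike.congr_fun h i
          have q2 := DFunLike.congr_fun h j
          have q3 := DFunLike.congr_fun h k
          have q4 := DFunLike.congr_fun h (i+k)
          have q5 := DFunLike.congr_fun h (j+k)
          rw [w3] at q1 q2 q3 q4 q5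
          have v1 : d i = 1 := by rw [q1]; split_ifs <;> omega
          have v2 : d j = 0 := by rw [q2]; split_ifs <;> omega
          have v3 : d k = 0 := by rw [q3]; split_ifs <;> omega
          have v4 : d (i+k) = 0 := by rw [q4]; split_ifs <;> omega
          have v5 : d (j+k) = 1 := by rw [q5]; split_ifs <;> omega
          exact ⟨by omega, by omega, by omega⟩
        rw [if_neg hq, mul_zero, if_neg hne1, if_neg hne2, if_neg hne3, add_zero, add_zero]
    · push_neg at hss
      obtain ⟨m, hm, hm1, hm2, hm3, hm4, hm5⟩ := hss
      have hm0 : m ≠ 0 := fun h => hm (h ▸ hd0)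
      have hprod : (d.prod fun m e => cP i j k m ^ e) = 0 := by
        apply Finset.prod_eq_zero (Finsupp.mem_support_iff.mpr hm)
        show cP i j k m ^ d m = 0
        rw [show cP i j k m = 0 by simp [cP, hm0, hm1, hm2, hm3, hm4, hm5], zero_pow hm]
      have hne1 : d ≠ Finsupp.single i 1 + Finsupp.single j 1 + Finsupp.single k 1 := by
        intro h
        apply hm
        rw [h, w1, if_neg (fun hc => hm1 hc.symm), if_neg (fun hc => hm2 hc.symm),
          if_neg (fun hc => hm3 hc.symm)]
      have hne2 : d ≠ Finsupp.single j 1 + Finsupp.single (i+k) 1 := by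
        intro h
        apply hm
        rw [h, w2, if_neg (fun hc => hm2 hc.symm), if_neg (fun hc => hm4 hc.symm)]
      have hne3 : d ≠ Finsupp.single i 1 + Finsupp.single (j+k) 1 := by
        intro h
        apply hm
        rw [h, w3, if_neg (fun hc => hm1 hc.symm), if_neg (fun hc => hm5 hc.symm)]
      rw [hprod, ite_self, mul_zero, if_neg hne1, if_neg hne2, if_neg hne3, add_zero, add_zero]
  -- RHS computation
  have hE2a : ∀ m, E2 i j 0 1 m 2 = 0 := by
    intro m
    simp only [E2]
    split_ifs <;> simp [Finsupp.single_apply]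
  have hE2b : ∀ m, E1 k 2 m 0 = 0 := by
    intro m
    simp only [E1]
    split_ifs <;> simp [Finsupp.single_apply]
  have hE2c : ∀ m, E1 k 2 m 1 = 0 := by
    intro m
    simp only [E1]
    split_ifs <;> simp [Finsupp.single_apply]
  have hR : ∀ a ∈ Finset.range (i+j+k+1),
      coeff (Finsupp.single 0 1 + Finsupp.single 1 1 + Finsupp.single 2 1)
        ((aeval (fun m => (monomial (E2 i j 0 1 m) (c2' i j m) : MvPolynomial (Fin 3) ℚ)))
            (L a)
          * (aeval (fun m => (monomial (E1 k 2 m) (c1 k m) : MvPolynomial (Fin 3) ℚ)))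
              (L (i+j+k-a)))
        = coeff (Finsupp.single i 1 + Finsupp.single j 1) (L a)
            * coeff (Finsupp.single k 1) (L (i+j+k-a)) := by
    intro a _
    rw [coeff_mul_split _ _ 1 1 1
      (fun v hv => vanish_at _ _ 2 hE2a _ v hv)
      (fun w hw' => by
        rcases hw' with hw' | hw'
        · exact vanish_at _ _ 0 hE2b _ w hw'
        · exact vanish_at _ _ 1 hE2c _ w hw')]
    rw [coeff_two_pt i j 0 1 (by omega) (by omega) (by omega) (by decide) _ (h0 a),
      coeff_single_pt k 2 (by omega) _ (h0 _)]
  rw [Finset.sum_congr rfl hR] at hco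
  have hcollapse : (∑ a ∈ Finset.range (i+j+k+1),
      coeff (Finsupp.single i 1 + Finsupp.single j 1) (L a)
        * coeff (Finsupp.single k 1) (L (i+j+k-a)))
      = coeff (Finsupp.single i 1 + Finsupp.single j 1) (L (i+j))
          * coeff (Finsupp.single k 1) (L k) := by
    rw [Finset.sum_eq_single_of_mem (i+j) (by simp)]
    · rw [show i + j + k - (i+j) = k by omega]
    · intro a _ hne
      have hz : coeff (Finsupp.single i 1 + Finsupp.single j 1) (L a) = 0 := by
        by_contra hc
        have := hw a _ hc
        rw [weight_pair] at this
        omega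
      rw [hz, zero_mul]
  rw [hcollapse] at hco
  rw [← hLHS, hco]
/-- For positive integers `i < j < k` with `i + j ≠ k`, the coefficients of the
Hirzebruch `L`-polynomials (or of any multiplicative sequence) satisfy
`h_{i,j,k} = 2·h_{i+j+k} + h_i h_j h_k − h_{i+j} h_k − h_{i+k} h_j − h_{j+k} h_i`. -/
theorem h3_formula (L : ℕ → MvPolynomial ℕ ℚ) (hL : IsMultiplicativeSeq L)
    (i j k : ℕ) (hi : 0 < i) (hij : i < j) (hjk : j < k) (hsum : i + j ≠ k) :
    h3 L i j k = 2 * h1 L (i + j + k) + h1 L i * h1 L j * h1 L k -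
      h1 L (i + j) * h1 L k - h1 L (i + k) * h1 L j - h1 L (j + k) * h1 L i := by
  have hA := identityA L hL i j k hi hij hjk
  have hB1 := identityB L hL i j hi hij
  have hB2 := identityB L hL j (i+k) (by omega) (by omega)
  have hB3 := identityB L hL i (j+k) hi (by omega)
  rw [show j + (i+k) = i+j+k by omega] at hB2
  rw [show i + (j+k) = i+j+k by omega] at hB3
  simp only [h3, h1]
  linear_combination hA + coeff (Finsupp.single k 1) (L k) * hB1 - hB2 - hB3
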